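/- Let P be a bounded open convex subset of ℝⁿ containing a point τ. Then there exists a unique vector c ∈ ℝⁿ such that τ = (∫_P x e^{c·x} dx) / (∫_P e^{c·x} dx). -/

import Mathlib

open MeasureTheory Set Metric Filter

set_option maxHeartbeats 1000000
set_option synthInstance.maxHeartbeats 400000

private lemma aux_integrableOn {n : ℕ} {P : Set (EuclideanSpace ℝ (Fin n))}
    (hbdd : Bornology.IsBounded P) {F : Type*} [NormedAddCommGroup F]
    {φ : EuclideanSpace ℝ (Fin n) → F} (hφ : Continuous φ) :
    IntegrableOn φ P volume :=
  (hφ.continuousOn.integrableOn_compact hbdd.isCompact_closure).mono_set subset_closure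

private lemma aux_hyperplane {n : ℕ} (v τ : EuclideanSpace ℝ (Fin n)) (hv : v ≠ 0) :
    volume {x : EuclideanSpace ℝ (Fin n) | (inner ℝ v (x - τ) : ℝ) = 0} = 0 := by
  have h := Measure.addHaar_affineSubspace (volume : Measure (EuclideanSpace ℝ (Fin n)))
    (AffineSubspace.mk' τ ((ℝ ∙ v)ᗮ)) ?_
  · convert h using 2
    ext x
    simp [AffineSubspace.mem_mk', Submodule.mem_orthogonal_singleton_iff_inner_right]
  · intro h
    have h1 : ((AffineSubspace.mk' τ ((ℝ ∙ v)ᗮ)).direction) = ⊤ := by rw [h]; simp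
    rw [AffineSubspace.direction_mk'] at h1
    have hvmem : v ∈ (ℝ ∙ v)ᗮ := h1 ▸ Submodule.mem_top
    have h2 := Submodule.mem_orthogonal_singleton_iff_inner_right.mp hvmem
    exact hv (inner_self_eq_zero.mp h2)

private lemma aux_deriv {n : ℕ} {P : Set (EuclideanSpace ℝ (Fin n))} {τ : EuclideanSpace ℝ (Fin n)}
    (hopen : IsOpen P) (hbdd : Bornology.IsBounded P) (c₀ : EuclideanSpace ℝ (Fin n)) :
    HasFDerivAt (fun c => ∫ x in P, Real.exp (inner ℝ c (x - τ) : ℝ))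
      (∫ x in P, Real.exp (inner ℝ c₀ (x - τ) : ℝ) • (innerSL ℝ (x - τ))) c₀ := by
  obtain ⟨R, hR⟩ := hbdd.exists_norm_le
  set R₁ : ℝ := R + ‖τ‖ with hR₁
  have hRy : ∀ x ∈ P, ‖x - τ‖ ≤ R₁ := fun x hx =>
    (norm_sub_le x τ).trans (add_le_add_left (hR x hx) _)
  have hinner : ∀ (y c : EuclideanSpace ℝ (Fin n)),
      HasFDerivAt (fun c : EuclideanSpace ℝ (Fin n) => (inner ℝ c y : ℝ)) (innerSL ℝ y) c := by
    intro y c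
    have h := (innerSL ℝ y).hasFDerivAt (x := c)
    have he : (fun c : EuclideanSpace ℝ (Fin n) => (inner ℝ c y : ℝ))
        = fun c : EuclideanSpace ℝ (Fin n) => (innerSL ℝ y) c := by
      ext c; simp only [ContinuousLinearMap.coe_coe, innerSL_apply_apply]; exact real_inner_comm _ _
    rw [he]; exact h
  have hcont : Continuous fun x : EuclideanSpace ℝ (Fin n) => Real.exp (inner ℝ c₀ (x - τ) : ℝ) :=
    Real.continuous_exp.comp (continuous_const.inner (continuous_id.sub continuous_const))
  have hvol : volume P < ⊤ := hbdd.measure_lt_top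
  refine hasFDerivAt_integral_of_dominated_of_fderiv_le (𝕜 := ℝ)
    (F := fun c x => Real.exp (inner ℝ c (x - τ) : ℝ))
    (F' := fun c x => Real.exp (inner ℝ c (x - τ) : ℝ) • innerSL ℝ (x - τ))
    (bound := fun _ => Real.exp ((‖c₀‖ + 1) * R₁) * R₁) (s := ball c₀ 1) (ball_mem_nhds c₀ one_pos) ?_ ?_ ?_ ?_ ?_ ?_
  · filter_upwards with c
    exact (Real.continuous_exp.comp
      (continuous_const.inner (continuous_id.sub continuous_const))).aestronglyMeasurable
  · exact (hcont.continuousOn.integrableOn_compact hbdd.isCompact_closure).mono_set subset_closure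
  · exact (hcont.smul ((innerSL ℝ).continuous.comp
      (continuous_id.sub continuous_const))).aestronglyMeasurable
  · rw [ae_restrict_iff' hopen.measurableSet]
    filter_upwards with x hx c hc
    have hR₁0 : (0:ℝ) ≤ R₁ := le_trans (norm_nonneg _) (hRy x hx)
    apply ContinuousLinearMap.opNorm_le_bound _ (by positivity)
    intro h
    rw [ContinuousLinearMap.smul_apply, innerSL_apply_apply, norm_smul, Real.norm_eq_abs,
      abs_of_pos (Real.exp_pos _), Real.norm_eq_abs]
    have h1 : (inner ℝ c (x - τ) : ℝ) ≤ (‖c₀‖ + 1) * R₁ := by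
      calc (inner ℝ c (x - τ) : ℝ) ≤ ‖c‖ * ‖x - τ‖ := real_inner_le_norm _ _
        _ ≤ (‖c₀‖ + 1) * R₁ := by
            apply mul_le_mul ?_ (hRy x hx) (norm_nonneg _) (by positivity)
            nlinarith [norm_sub_norm_le c c₀, (mem_ball_iff_norm.mp hc).le]
    have h3 : |(inner ℝ (x - τ) h : ℝ)| ≤ R₁ * ‖h‖ :=
      le_trans (abs_real_inner_le_norm _ _) (mul_le_mul_of_nonneg_right (hRy x hx) (norm_nonneg _))
    calc Real.exp (inner ℝ c (x - τ)) * |(inner ℝ (x - τ) h : ℝ)|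
        ≤ Real.exp ((‖c₀‖ + 1) * R₁) * (R₁ * ‖h‖) := by
          exact mul_le_mul (Real.exp_le_exp.mpr h1) h3 (abs_nonneg _) (Real.exp_pos _).le
      _ = Real.exp ((‖c₀‖ + 1) * R₁) * R₁ * ‖h‖ := by ring
  · rw [integrable_const_iff]; right
    exact ⟨by simpa using lt_of_le_of_lt (measure_mono (inter_subset_left (t := P))) hvol⟩
  · filter_upwards with x c _
    exact (hinner (x - τ) c).exp

private lemma aux_equiv {n : ℕ} {P : Set (EuclideanSpace ℝ (Fin n))} {τ : EuclideanSpace ℝ (Fin n)}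
    (hbdd : Bornology.IsBounded P) (c : EuclideanSpace ℝ (Fin n)) :
    ((∫ x in P, Real.exp (inner ℝ c x : ℝ) • x) =
        (∫ x in P, Real.exp (inner ℝ c x : ℝ)) • τ) ↔
      (∫ x in P, Real.exp (inner ℝ c (x - τ) : ℝ) • (x - τ)) = 0 := by
  have hce : Continuous fun x : EuclideanSpace ℝ (Fin n) => Real.exp (inner ℝ c (x - τ) : ℝ) :=
    Real.continuous_exp.comp (continuous_const.inner (continuous_id.sub continuous_const))
  have hint1 : IntegrableOn (fun x : EuclideanSpace ℝ (Fin n) =>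
      Real.exp (inner ℝ c (x - τ) : ℝ) • x) P volume :=
    aux_integrableOn hbdd (hce.smul continuous_id)
  have hint2 : IntegrableOn (fun x : EuclideanSpace ℝ (Fin n) =>
      Real.exp (inner ℝ c (x - τ) : ℝ)) P volume := aux_integrableOn hbdd hce
  have hsplit : (∫ x in P, Real.exp (inner ℝ c (x - τ) : ℝ) • (x - τ)) =
      (∫ x in P, Real.exp (inner ℝ c (x - τ) : ℝ) • x)
        - (∫ x in P, Real.exp (inner ℝ c (x - τ) : ℝ)) • τ := by
    rw [← integral_smul_const, ← integral_sub hint1 (hint2.smul_const τ)]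
    congr 1; ext x; rw [smul_sub]
  have hkey : ∀ x : EuclideanSpace ℝ (Fin n), Real.exp (inner ℝ c x : ℝ) =
      Real.exp (inner ℝ c τ : ℝ) * Real.exp (inner ℝ c (x - τ) : ℝ) := by
    intro x; rw [← Real.exp_add, inner_sub_right]; ring_nf
  have h1 : (∫ x in P, Real.exp (inner ℝ c x : ℝ) • x) =
      Real.exp (inner ℝ c τ : ℝ) • (∫ x in P, Real.exp (inner ℝ c (x - τ) : ℝ) • x) := by
    rw [← integral_smul]
    exact integral_congr_ae (Filter.Eventually.of_forall fun x => by
      simp only []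
      rw [hkey x, smul_smul])
  have h2 : (∫ x in P, Real.exp (inner ℝ c x : ℝ)) =
      Real.exp (inner ℝ c τ : ℝ) * (∫ x in P, Real.exp (inner ℝ c (x - τ) : ℝ)) := by
    rw [← integral_const_mul]
    exact integral_congr_ae (Filter.Eventually.of_forall fun x => by simp only []; exact hkey x)
  rw [h1, h2, hsplit, sub_eq_zero, mul_smul]
  constructor
  · intro h
    exact smul_right_injective _ (Real.exp_ne_zero _) h
  · intro h; rw [h]

private lemma aux_coercive {n : ℕ} {P : Set (EuclideanSpace ℝ (Fin n))} {τ : EuclideanSpace ℝ (Fin n)}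
    (hopen : IsOpen P) (hbdd : Bornology.IsBounded P) (hτ : τ ∈ P) :
    ∃ δ V : ℝ, 0 < δ ∧ 0 < V ∧ ∀ c : EuclideanSpace ℝ (Fin n), c ≠ 0 →
      V * Real.exp (δ * ‖c‖) ≤ ∫ x in P, Real.exp (inner ℝ c (x - τ) : ℝ) := by
  obtain ⟨ε, hε, hball⟩ := Metric.isOpen_iff.mp hopen τ hτ
  set δ := ε / 4 with hδdef
  have hδ : 0 < δ := by positivity
  refine ⟨δ, (volume (ball (0 : EuclideanSpace ℝ (Fin n)) δ)).toReal, hδ, ?_, ?_⟩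
  · have := measure_ball_pos volume (0 : EuclideanSpace ℝ (Fin n)) hδ
    exact ENNReal.toReal_pos this.ne' (measure_ball_lt_top).ne
  intro c hc
  have hcn : 0 < ‖c‖ := norm_pos_iff.mpr hc
  set u : EuclideanSpace ℝ (Fin n) := ‖c‖⁻¹ • c with hu
  have hun : ‖u‖ = 1 := by rw [hu, norm_smul]; simp [abs_of_pos (inv_pos.mpr hcn)]; field_simp
  set p : EuclideanSpace ℝ (Fin n) := τ + (2 * δ) • u with hp
  have hsub : ball p δ ⊆ P := by
    intro x hx
    apply hball
    rw [mem_ball] at hx ⊢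
    have h1 : dist x τ ≤ dist x p + dist p τ := dist_triangle _ _ _
    have h2 : dist p τ = 2 * δ := by
      rw [hp, dist_eq_norm]
      have he : τ + (2 * δ) • u - τ = (2 * δ) • u := by abel
      rw [he, norm_smul, hun, Real.norm_eq_abs, abs_of_pos (by positivity : (0:ℝ) < 2 * δ)]
      ring
    have : dist x τ < δ + 2 * δ := by rw [← h2]; linarith [hx]
    linarith [hδ]
  have hlow : ∀ x ∈ ball p δ, δ * ‖c‖ ≤ (inner ℝ c (x - τ) : ℝ) := by
    intro x hx
    have hxp : ‖x - p‖ < δ := mem_ball_iff_norm.mp hx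
    have hdecomp : x - τ = (2 * δ) • u + (x - p) := by rw [hp]; abel
    have hcu : (inner ℝ c u : ℝ) = ‖c‖ := by
      rw [hu, real_inner_smul_right, real_inner_self_eq_norm_sq]
      field_simp
    have hbd : |(inner ℝ c (x - p) : ℝ)| ≤ ‖c‖ * ‖x - p‖ := abs_real_inner_le_norm _ _
    rw [hdecomp, inner_add_right, real_inner_smul_right, hcu]
    nlinarith [abs_le.mp hbd]
  have hcont : Continuous fun x : EuclideanSpace ℝ (Fin n) => Real.exp (inner ℝ c (x - τ) : ℝ) :=
    Real.continuous_exp.comp (continuous_const.inner (continuous_id.sub continuous_const))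
  calc (volume (ball (0 : EuclideanSpace ℝ (Fin n)) δ)).toReal * Real.exp (δ * ‖c‖)
      = Real.exp (δ * ‖c‖) * (volume (ball p δ)).toReal := by
        rw [Measure.addHaar_ball_center volume p δ]; ring
    _ ≤ ∫ x in ball p δ, Real.exp (inner ℝ c (x - τ) : ℝ) := by
        have := setIntegral_ge_of_const_le measurableSet_ball measure_ball_lt_top.ne
          (fun x hx => Real.exp_le_exp.mpr (hlow x hx))
          (aux_integrableOn (isBounded_ball) hcont)
        rw [smul_eq_mul, mul_comm] at this; exact this
    _ ≤ ∫ x in P, Real.exp (inner ℝ c (x - τ) : ℝ) := by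
        apply setIntegral_mono_set (aux_integrableOn hbdd hcont)
          (Filter.Eventually.of_forall fun x => (Real.exp_pos _).le)
          (HasSubset.Subset.eventuallyLE hsub)

private lemma aux_exists {n : ℕ} {P : Set (EuclideanSpace ℝ (Fin n))} {τ : EuclideanSpace ℝ (Fin n)}
    (hopen : IsOpen P) (hbdd : Bornology.IsBounded P) (hτ : τ ∈ P) :
    ∃ c : EuclideanSpace ℝ (Fin n),
      (∫ x in P, Real.exp (inner ℝ c (x - τ) : ℝ) • (x - τ)) = 0 := by
  set f : EuclideanSpace ℝ (Fin n) → ℝ :=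
    fun c => ∫ x in P, Real.exp (inner ℝ c (x - τ) : ℝ) with hf
  have hfd : ∀ c₀, HasFDerivAt f
      (∫ x in P, Real.exp (inner ℝ c₀ (x - τ) : ℝ) • (innerSL ℝ (x - τ))) c₀ :=
    fun c₀ => aux_deriv hopen hbdd c₀
  have hfc : Continuous f := by
    apply continuous_iff_continuousAt.mpr
    exact fun c₀ => (hfd c₀).differentiableAt.continuousAt
  obtain ⟨δ, V, hδ, hV, hcoer⟩ := aux_coercive hopen hbdd hτ
  -- eventual bound in cocompact
  have htend : Tendsto (fun t : ℝ => V * Real.exp (δ * t)) atTop atTop := by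
    apply Tendsto.const_mul_atTop hV
    exact Real.tendsto_exp_atTop.comp (tendsto_id.const_mul_atTop hδ)
  have hev : ∀ᶠ c : EuclideanSpace ℝ (Fin n) in cocompact _, f 0 ≤ f c := by
    have h1 : ∀ᶠ t : ℝ in atTop, 1 ≤ t ∧ f 0 ≤ V * Real.exp (δ * t) :=
      (eventually_ge_atTop 1).and (htend.eventually_ge_atTop (f 0))
    filter_upwards [tendsto_norm_cocompact_atTop.eventually h1] with c hc
    have hc0 : c ≠ 0 := by
      intro h; rw [h] at hc; simp at hc; linarith [hc.1]
    exact hc.2.trans (hcoer c hc0)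
  obtain ⟨c₀, hmin⟩ := hfc.exists_forall_le' 0 hev
  have hloc : IsLocalMin f c₀ := Filter.Eventually.of_forall hmin
  have hzero := hloc.hasFDerivAt_eq_zero (hfd c₀)
  -- convert to vector equation
  have hcont' : Continuous fun x : EuclideanSpace ℝ (Fin n) =>
      Real.exp (inner ℝ c₀ (x - τ) : ℝ) • (innerSL ℝ (x - τ)) := by
    exact (Real.continuous_exp.comp
      (continuous_const.inner (continuous_id.sub continuous_const))).smul
      ((innerSL ℝ).continuous.comp (continuous_id.sub continuous_const))
  have hint' : IntegrableOn (fun x : EuclideanSpace ℝ (Fin n) =>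
      Real.exp (inner ℝ c₀ (x - τ) : ℝ) • (innerSL ℝ (x - τ))) P volume :=
    aux_integrableOn hbdd hcont'
  refine ⟨c₀, ?_⟩
  apply integral_eq_zero_of_forall_integral_inner_eq_zero (𝕜 := ℝ)
  · exact aux_integrableOn hbdd ((Real.continuous_exp.comp
      (continuous_const.inner (continuous_id.sub continuous_const))).smul
      (continuous_id.sub continuous_const))
  intro h
  have happ := ContinuousLinearMap.integral_apply hint' (v := h)
  rw [hzero] at happ
  simp only [ContinuousLinearMap.zero_apply, ContinuousLinearMap.smul_apply,
    innerSL_apply_apply] at happ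
  rw [← happ.symm]
  apply integral_congr_ae
  filter_upwards with x
  rw [real_inner_smul_right, smul_eq_mul, real_inner_comm h (x - τ)]

private lemma sign_lemma {t : ℝ} (ht : t ≠ 0) : 0 < (Real.exp t - 1) * t := by
  rcases lt_or_gt_of_ne ht with h | h
  · have h1 : Real.exp t < 1 := by
      calc Real.exp t < Real.exp 0 := Real.exp_lt_exp.mpr h
        _ = 1 := Real.exp_zero
    exact mul_pos_of_neg_of_neg (by linarith) h
  · have h1 : 1 < Real.exp t := by
      calc (1:ℝ) = Real.exp 0 := Real.exp_zero.symm
        _ < Real.exp t := Real.exp_lt_exp.mpr h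
    exact mul_pos (by linarith) h

private lemma aux_unique {n : ℕ} {P : Set (EuclideanSpace ℝ (Fin n))} {τ : EuclideanSpace ℝ (Fin n)}
    (hopen : IsOpen P) (hbdd : Bornology.IsBounded P) (hpos : 0 < volume P)
    {c₁ c₂ : EuclideanSpace ℝ (Fin n)}
    (h1 : (∫ x in P, Real.exp (inner ℝ c₁ x : ℝ) • x) =
      (∫ x in P, Real.exp (inner ℝ c₁ x : ℝ)) • τ)
    (h2 : (∫ x in P, Real.exp (inner ℝ c₂ x : ℝ) • x) =
      (∫ x in P, Real.exp (inner ℝ c₂ x : ℝ)) • τ) : c₁ = c₂ := by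
  by_contra hne
  set v : EuclideanSpace ℝ (Fin n) := c₁ - c₂ with hv
  have hv0 : v ≠ 0 := sub_ne_zero_of_ne hne
  set a : ℝ := inner ℝ v τ with ha
  set u : EuclideanSpace ℝ (Fin n) → ℝ := fun x => (inner ℝ v x : ℝ) - a with hu
  have hucont : Continuous u := (continuous_const.inner continuous_id).sub continuous_const
  -- derive scalar conditions
  have hz : ∀ c : EuclideanSpace ℝ (Fin n),
      ((∫ x in P, Real.exp (inner ℝ c x : ℝ) • x) =
        (∫ x in P, Real.exp (inner ℝ c x : ℝ)) • τ) →
      (∫ x in P, Real.exp (inner ℝ c x : ℝ) * u x) = 0 := by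
    intro c hc
    have hec : Continuous fun x : EuclideanSpace ℝ (Fin n) => Real.exp (inner ℝ c x : ℝ) :=
      Real.continuous_exp.comp (continuous_const.inner continuous_id)
    have hint1 : IntegrableOn (fun x : EuclideanSpace ℝ (Fin n) =>
        Real.exp (inner ℝ c x : ℝ) • x) P volume :=
      aux_integrableOn hbdd (hec.smul continuous_id)
    have hint2 : IntegrableOn (fun x : EuclideanSpace ℝ (Fin n) =>
        Real.exp (inner ℝ c x : ℝ)) P volume := aux_integrableOn hbdd hec
    have key := integral_inner (𝕜 := ℝ) hint1 v
    rw [hc, real_inner_smul_right] at key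
    -- key : ∫ ⟪v, exp • x⟫ = (∫ exp) * ⟪v, τ⟫
    have key2 : (∫ x in P, Real.exp (inner ℝ c x : ℝ) * (inner ℝ v x : ℝ)) =
        (∫ x in P, Real.exp (inner ℝ c x : ℝ)) * a := by
      rw [← key]
      apply integral_congr_ae
      filter_upwards with x
      rw [real_inner_smul_right]
    have hsub : (∫ x in P, Real.exp (inner ℝ c x : ℝ) * u x)
        = (∫ x in P, Real.exp (inner ℝ c x : ℝ) * (inner ℝ v x : ℝ))
          - (∫ x in P, Real.exp (inner ℝ c x : ℝ)) * a := by
      have hA : IntegrableOn (fun x : EuclideanSpace ℝ (Fin n) =>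
          Real.exp (inner ℝ c x : ℝ) * (inner ℝ v x : ℝ)) P volume :=
        aux_integrableOn hbdd (hec.mul (continuous_const.inner continuous_id'))
      have hB : IntegrableOn (fun x : EuclideanSpace ℝ (Fin n) =>
          Real.exp (inner ℝ c x : ℝ) * a) P volume :=
        aux_integrableOn hbdd (hec.mul continuous_const)
      rw [← integral_mul_const, ← integral_sub hA hB]
      apply integral_congr_ae
      filter_upwards with x
      simp only [hu]; ring
    rw [hsub, key2, sub_self]
  have hz1 := hz c₁ h1
  have hz2 := hz c₂ h2
  -- the nonnegative combination
  set w : EuclideanSpace ℝ (Fin n) → ℝ :=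
    fun x => Real.exp (inner ℝ c₂ x : ℝ) * Real.exp a * ((Real.exp (u x) - 1) * u x) with hw
  have hwcont : Continuous w := by
    apply Continuous.mul
    · exact (Real.continuous_exp.comp (continuous_const.inner continuous_id)).mul continuous_const
    · exact ((Real.continuous_exp.comp hucont).sub continuous_const).mul hucont
  have hwpt : ∀ x, w x = Real.exp (inner ℝ c₁ x : ℝ) * u x
      - Real.exp a * (Real.exp (inner ℝ c₂ x : ℝ) * u x) := by
    intro x
    have hsplit : (inner ℝ c₁ x : ℝ) = (inner ℝ c₂ x : ℝ) + (u x + a) := by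
      simp only [hu]
      have : (inner ℝ v x : ℝ) = (inner ℝ c₁ x : ℝ) - (inner ℝ c₂ x : ℝ) := by
        rw [hv, inner_sub_left]
      rw [this]; ring
    rw [hsplit, Real.exp_add, Real.exp_add, hw]
    ring
  have hwint : (∫ x in P, w x) = 0 := by
    have he1 : Continuous fun x : EuclideanSpace ℝ (Fin n) =>
        Real.exp (inner ℝ c₁ x : ℝ) * u x :=
      (Real.continuous_exp.comp (continuous_const.inner continuous_id)).mul hucont
    have he2 : Continuous fun x : EuclideanSpace ℝ (Fin n) =>
        Real.exp (inner ℝ c₂ x : ℝ) * u x :=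
      (Real.continuous_exp.comp (continuous_const.inner continuous_id)).mul hucont
    calc (∫ x in P, w x)
        = (∫ x in P, Real.exp (inner ℝ c₁ x : ℝ) * u x)
          - Real.exp a * (∫ x in P, Real.exp (inner ℝ c₂ x : ℝ) * u x) := by
          rw [← integral_const_mul,
            ← integral_sub (aux_integrableOn hbdd he1)
              (aux_integrableOn (φ := fun x => Real.exp a * (Real.exp (inner ℝ c₂ x : ℝ) * u x))
                hbdd (continuous_const.mul he2))]
          exact integral_congr_ae (Filter.Eventually.of_forall fun x => hwpt x)
      _ = 0 := by rw [hz1, hz2]; ring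
  have hwnn : ∀ x, 0 ≤ w x := by
    intro x
    rcases eq_or_ne (u x) 0 with h | h
    · simp [hw, h]
    · exact le_of_lt (mul_pos (mul_pos (Real.exp_pos _) (Real.exp_pos _)) (sign_lemma h))
  have hae : ∀ᵐ x ∂(volume.restrict P), w x = 0 := by
    have h := (integral_eq_zero_iff_of_nonneg (fun x => hwnn x)
      (aux_integrableOn hbdd hwcont)).mp hwint
    filter_upwards [h] with x hx using hx
  have hae2 : ∀ᵐ x : EuclideanSpace ℝ (Fin n), x ∈ P → (inner ℝ v (x - τ) : ℝ) = 0 := by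
    rw [← ae_restrict_iff' hopen.measurableSet]
    filter_upwards [hae] with x hx
    have hu0 : u x = 0 := by
      by_contra h
      have := mul_pos (mul_pos (Real.exp_pos (inner ℝ c₂ x : ℝ)) (Real.exp_pos a)) (sign_lemma h)
      exact absurd hx (ne_of_gt (show (0:ℝ) < w x from this))
    rw [inner_sub_right]
    simpa [hu, ha] using hu0
  -- measure contradiction
  set S : Set (EuclideanSpace ℝ (Fin n)) := {x | (inner ℝ v (x - τ) : ℝ) = 0} with hS
  have hSnull : volume S = 0 := aux_hyperplane v τ hv0
  have hdiff : volume (P \ S) = 0 := by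
    have h := ae_iff.mp hae2
    apply measure_mono_null ?_ h
    intro x hx
    show ¬(x ∈ P → (inner ℝ v (x - τ) : ℝ) = 0)
    exact fun him => hx.2 (him hx.1)
  have : volume P ≤ volume (P ∩ S) + volume (P \ S) := measure_le_inter_add_diff _ _ _
  rw [hdiff, add_zero] at this
  have : volume P ≤ volume S := le_trans this (measure_mono inter_subset_right)
  rw [hSnull] at this
  exact hpos.ne' (le_antisymm this zero_le)

theorem stmt0 (n : ℕ) (P : Set (EuclideanSpace ℝ (Fin n)))
    (τ : EuclideanSpace ℝ (Fin n))
    (hopen : IsOpen P) (hconv : Convex ℝ P) (hbdd : Bornology.IsBounded P)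
    (hpos : 0 < volume P) (hτ : τ ∈ P) :
    ∃! c : EuclideanSpace ℝ (Fin n),
      (∫ x in P, Real.exp (inner ℝ c x : ℝ) • x) =
        (∫ x in P, Real.exp (inner ℝ c x : ℝ)) • τ := by
  obtain ⟨c, hc⟩ := aux_exists hopen hbdd hτ
  refine ⟨c, (aux_equiv hbdd c).mpr hc, fun y hy =>
    aux_unique hopen hbdd hpos hy ((aux_equiv hbdd c).mpr hc)⟩
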